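/- Every weak-permutably convergent series of real numbers is absolutely convergent. -/

import Mathlib

open Filter Finset Topology
open scoped Classical

def SeriesConvTo (a : ℕ → ℝ) (s : ℝ) : Prop :=
  Filter.Tendsto (fun n => ∑ i ∈ Finset.range n, a i) Filter.atTop (nhds s)

def BracketConvTo (c : ℕ → ℝ) (f : ℕ → ℕ) (t : ℝ) : Prop :=
  StrictMono f ∧ f 0 = 0 ∧
    Filter.Tendsto (fun K => ∑ i ∈ Finset.range (f K), c i) Filter.atTop (nhds t)

lemma filter_range_eq_image_nth (P : ℕ → Prop) [DecidablePred P]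
    (hP : (setOf P).Infinite) (t : ℕ) :
    (Finset.range t).filter P = (Finset.range (Nat.count P t)).image (Nat.nth P) := by
  ext i
  simp only [mem_filter, mem_range, mem_image]
  constructor
  · rintro ⟨hit, hPi⟩
    exact ⟨Nat.count P i, Nat.count_strict_mono hPi hit, Nat.nth_count hPi⟩
  · rintro ⟨k, hk, rfl⟩
    exact ⟨(Nat.lt_nth_iff_count_lt hP).mp hk, Nat.nth_mem_of_infinite hP k⟩

lemma sum_filter_range_eq (P : ℕ → Prop) [DecidablePred P]
    (hP : (setOf P).Infinite) (g : ℕ → ℝ) (t : ℕ) :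
    ∑ i ∈ (Finset.range t).filter P, g i
      = ∑ k ∈ Finset.range (Nat.count P t), g (Nat.nth P k) := by
  rw [filter_range_eq_image_nth P hP t, Finset.sum_image]
  exact fun x _ y _ h => Nat.nth_injective hP h

lemma count_add_count_not (P : ℕ → Prop) [DecidablePred P] (t : ℕ) :
    Nat.count P t + Nat.count (fun i => ¬ P i) t = t := by
  induction t with
  | zero => simp
  | succ n ih =>
    rw [Nat.count_succ, Nat.count_succ]
    by_cases h : P n <;> simp [h] <;> omega

lemma exists_perm_tendsto_atTop (a : ℕ → ℝ) (s : ℝ)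
    (hconv : Tendsto (fun n => ∑ i ∈ Finset.range n, a i) atTop (𝓝 s))
    (habs : Tendsto (fun n => ∑ i ∈ Finset.range n, |a i|) atTop atTop) :
    ∃ σ : Equiv.Perm ℕ,
      Tendsto (fun t => ∑ i ∈ Finset.range t, a (σ i)) atTop atTop := by
  set pP : ℕ → Prop := fun n => 0 ≤ a n with hpP
  set pN : ℕ → Prop := fun n => a n < 0 with hpN
  -- positive-part partial sums tend to infinity
  have hTplus_eq : ∀ n, ∑ i ∈ (Finset.range n).filter pP, a i
      = ((∑ i ∈ Finset.range n, a i) + ∑ i ∈ Finset.range n, |a i|) / 2 := by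
    intro n
    rw [Finset.sum_filter, ← Finset.sum_add_distrib, Finset.sum_div]
    refine Finset.sum_congr rfl fun i _ => ?_
    by_cases h : 0 ≤ a i
    · rw [if_pos h, abs_of_nonneg h]; ring
    · rw [if_neg h, abs_of_neg (lt_of_not_ge h)]; ring
  have hTplus : Tendsto (fun n => ∑ i ∈ (Finset.range n).filter pP, a i) atTop atTop := by
    simp only [hTplus_eq]
    exact (hconv.add_atTop habs).atTop_div_const two_pos
  have hTminus_eq : ∀ n, ∑ i ∈ (Finset.range n).filter pN, (-a i)
      = ((-∑ i ∈ Finset.range n, a i) + ∑ i ∈ Finset.range n, |a i|) / 2 := by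
    intro n
    rw [Finset.sum_filter]
    have hterm : ∀ i ∈ Finset.range n,
        (if pN i then -a i else 0) = (-a i + |a i|) / 2 := by
      intro i _
      by_cases h : a i < 0
      · rw [if_pos h, abs_of_neg h]; ring
      · rw [if_neg h, abs_of_nonneg (le_of_not_gt h)]; ring
    rw [Finset.sum_congr rfl hterm, ← Finset.sum_div, Finset.sum_add_distrib,
      Finset.sum_neg_distrib]
  have hTminus : Tendsto (fun n => ∑ i ∈ (Finset.range n).filter pN, (-a i)) atTop atTop := by
    simp only [hTminus_eq]
    exact (hconv.neg.add_atTop habs).atTop_div_const two_pos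
  -- pP and pN are infinite
  have hPinf : (setOf pP).Infinite := by
    by_contra hfin
    rw [Set.not_infinite] at hfin
    obtain ⟨n, hn⟩ := (tendsto_atTop.mp hTplus (∑ i ∈ hfin.toFinset, |a i| + 1)).exists
    have hsub : (Finset.range n).filter pP ⊆ hfin.toFinset := by
      intro i hi
      simp only [Set.Finite.mem_toFinset]
      exact (Finset.mem_filter.mp hi).2
    have h1 : ∑ i ∈ (Finset.range n).filter pP, a i ≤ ∑ i ∈ hfin.toFinset, |a i| := by
      calc ∑ i ∈ (Finset.range n).filter pP, a i
          ≤ ∑ i ∈ (Finset.range n).filter pP, |a i| :=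
            Finset.sum_le_sum fun i _ => le_abs_self _
        _ ≤ ∑ i ∈ hfin.toFinset, |a i| :=
            Finset.sum_le_sum_of_subset_of_nonneg hsub fun i _ _ => abs_nonneg _
    linarith
  have hNinf : (setOf pN).Infinite := by
    by_contra hfin
    rw [Set.not_infinite] at hfin
    obtain ⟨n, hn⟩ := (tendsto_atTop.mp hTminus (∑ i ∈ hfin.toFinset, |a i| + 1)).exists
    have hsub : (Finset.range n).filter pN ⊆ hfin.toFinset := by
      intro i hi
      simp only [Set.Finite.mem_toFinset]
      exact (Finset.mem_filter.mp hi).2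
    have h1 : ∑ i ∈ (Finset.range n).filter pN, (-a i) ≤ ∑ i ∈ hfin.toFinset, |a i| := by
      calc ∑ i ∈ (Finset.range n).filter pN, (-a i)
          ≤ ∑ i ∈ (Finset.range n).filter pN, |a i| :=
            Finset.sum_le_sum fun i _ => neg_le_abs _
        _ ≤ ∑ i ∈ hfin.toFinset, |a i| :=
            Finset.sum_le_sum_of_subset_of_nonneg hsub fun i _ _ => abs_nonneg _
    linarith
  set p : ℕ → ℕ := Nat.nth pP with hp_def
  set q : ℕ → ℕ := Nat.nth pN with hq_def
  have hp_nonneg : ∀ k, 0 ≤ a (p k) := fun k => Nat.nth_mem_of_infinite hPinf k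
  have hq_neg : ∀ k, a (q k) < 0 := fun k => Nat.nth_mem_of_infinite hNinf k
  set Sp : ℕ → ℝ := fun r => ∑ i ∈ Finset.range r, a (p i) with hSp_def
  have hSp_mono : Monotone Sp := fun r r' h =>
    Finset.sum_le_sum_of_subset_of_nonneg (Finset.range_subset_range.mpr h)
      fun i _ _ => hp_nonneg i
  have hSp_big : ∀ (B : ℝ) (n₀ : ℕ), ∃ r, n₀ < r ∧ B ≤ Sp r := by
    intro B n₀
    obtain ⟨n, hn⟩ := (tendsto_atTop.mp hTplus B).exists
    rw [sum_filter_range_eq pP hPinf a n] at hn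
    exact ⟨max (Nat.count pP n) (n₀ + 1), by omega,
      le_trans hn (hSp_mono (le_max_left _ _))⟩
  -- choose block lengths m with large positive partial sums
  have key : ∀ (k n₀ : ℕ), ∃ r, n₀ < r ∧
      (k : ℝ) + ∑ j ∈ Finset.range (k + 1), |a (q j)| ≤ Sp r :=
    fun k n₀ => hSp_big _ n₀
  set m : ℕ → ℕ := fun k =>
    Nat.rec (Classical.choose (key 0 0))
      (fun k ih => Classical.choose (key (k + 1) ih)) k with hm_def
  have hm_spec : ∀ k : ℕ, (k : ℝ) + ∑ j ∈ Finset.range (k + 1), |a (q j)| ≤ Sp (m k) := by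
    intro k
    cases k with
    | zero => exact (Classical.choose_spec (key 0 0)).2
    | succ k => exact (Classical.choose_spec (key (k + 1) (m k))).2
  have hm_lt : ∀ k, m k < m (k + 1) :=
    fun k => (Classical.choose_spec (key (k + 1) (m k))).1
  set c : ℕ → ℕ := fun k => m k + k with hc_def
  have hc_mono : StrictMono c := strictMono_nat_of_lt_succ fun k => by
    have := hm_lt k; simp only [hc_def]; omega
  set pC : ℕ → Prop := fun i => ∃ k, c k = i with hpC_def
  have hCinf : (setOf pC).Infinite :=
    Set.infinite_range_of_injective hc_mono.injective
  have hnotC : ∀ k, ¬ pC (c k + 1) := by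
    intro k ⟨j, hj⟩
    rcases le_or_gt j k with h | h
    · have h1 : c j ≤ c k := hc_mono.monotone h
      omega
    · have h1 : c (k + 1) ≤ c j := hc_mono.monotone (Nat.succ_le_of_lt h)
      have h2 := hm_lt k
      have e1 : c (k + 1) = m (k + 1) + (k + 1) := rfl
      have e2 : c k = m k + k := rfl
      omega
  have hCcinf : (setOf fun i => ¬ pC i).Infinite := by
    apply Set.infinite_of_injective_forall_mem
      (f := fun k => c k + 1) (fun x y h => hc_mono.injective (by simpa using h)) hnotC
  have hc_count : ∀ k, Nat.count pC (c k) = k := by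
    intro k
    rw [Nat.count_eq_card_filter_range]
    have himg : (Finset.range (c k)).filter pC = (Finset.range k).image c := by
      ext i
      simp only [mem_filter, mem_range, mem_image]
      constructor
      · rintro ⟨hik, j, rfl⟩
        exact ⟨j, hc_mono.lt_iff_lt.mp hik, rfl⟩
      · rintro ⟨j, hj, rfl⟩
        exact ⟨hc_mono hj, j, rfl⟩
    rw [himg, Finset.card_image_of_injective _ hc_mono.injective, Finset.card_range]
  have hc_nth : ∀ k, Nat.nth pC k = c k := by
    intro k
    conv_lhs => rw [← hc_count k]
    exact Nat.nth_count ⟨k, rfl⟩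
  -- define the permutation
  set σf : ℕ → ℕ := fun i =>
    if pC i then q (Nat.count pC i) else p (Nat.count (fun j => ¬ pC j) i) with hσf_def
  have hσC : ∀ k, σf (c k) = q k := by
    intro k
    simp only [hσf_def, if_pos (⟨k, rfl⟩ : pC (c k)), hc_count k]
    exact if_pos ⟨k, rfl⟩
  have hσN : ∀ k, σf (Nat.nth (fun j => ¬ pC j) k) = p k := by
    intro k
    have hmem : ¬ pC (Nat.nth (fun j => ¬ pC j) k) := Nat.nth_mem_of_infinite hCcinf k
    simp only [hσf_def, if_neg hmem, Nat.count_nth_of_infinite hCcinf k]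
  have hinj : Function.Injective σf := by
    intro i j h
    by_cases hi : pC i <;> by_cases hj : pC j <;>
      simp only [hσf_def, if_pos, if_neg, hi, hj, if_true, if_false] at h
    · exact Nat.count_injective hi hj (Nat.nth_injective hNinf h)
    · exact absurd (h ▸ hq_neg (Nat.count pC i)) (not_lt.mpr (hp_nonneg _))
    · exact absurd (h ▸ hp_nonneg (Nat.count (fun j => ¬ pC j) i)) (not_le.mpr (hq_neg _))
    · exact Nat.count_injective hi hj (Nat.nth_injective hPinf h)
  have hsurj : Function.Surjective σf := by
    intro n
    by_cases hn : 0 ≤ a n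
    · refine ⟨Nat.nth (fun j => ¬ pC j) (Nat.count pP n), ?_⟩
      rw [hσN]
      exact Nat.nth_count hn
    · refine ⟨c (Nat.count pN n), ?_⟩
      rw [hσC]
      exact Nat.nth_count (lt_of_not_ge hn)
  set σ : Equiv.Perm ℕ := Equiv.ofBijective σf ⟨hinj, hsurj⟩ with hσ_def
  have hσ_eq : ∀ i, σ i = σf i := fun i => rfl
  refine ⟨σ, ?_⟩
  -- partial sum formula
  have hSsum : ∀ t, ∑ i ∈ Finset.range t, a (σ i)
      = Sp (Nat.count (fun j => ¬ pC j) t)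
        + ∑ k ∈ Finset.range (Nat.count pC t), a (q k) := by
    intro t
    simp only [hσ_eq]
    rw [← Finset.sum_filter_add_sum_filter_not (Finset.range t) pC (fun i => a (σf i))]
    rw [sum_filter_range_eq pC hCinf (fun i => a (σf i)) t]
    have h2 : ∑ i ∈ (Finset.range t).filter (fun i => ¬ pC i), a (σf i)
        = Sp (Nat.count (fun j => ¬ pC j) t) := by
      rw [sum_filter_range_eq (fun j => ¬ pC j) hCcinf (fun i => a (σf i)) t]
      exact Finset.sum_congr rfl fun k _ => by rw [hσN k]
    rw [h2]
    have h1 : ∑ k ∈ Finset.range (Nat.count pC t), a (σf (Nat.nth pC k))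
        = ∑ k ∈ Finset.range (Nat.count pC t), a (q k) := by
      refine Finset.sum_congr rfl fun k _ => ?_
      rw [hc_nth k, hσC k]
    rw [h1, add_comm]
  -- lower bound
  have hbound : ∀ K t : ℕ, c K < t → (K : ℝ) ≤ ∑ i ∈ Finset.range t, a (σ i) := by
    intro K t ht
    rw [hSsum t]
    set st := Nat.count pC t with hst_def
    set rt := Nat.count (fun j => ¬ pC j) t with hrt_def
    have hKst : K < st := by
      rw [hst_def]
      exact (Nat.lt_nth_iff_count_lt hCinf).mpr (by rw [hc_nth]; exact ht)
    obtain ⟨s', hs'⟩ : ∃ s', st = s' + 1 := ⟨st - 1, by omega⟩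
    have hcs' : c s' < t := by
      rw [← hc_nth]
      exact (Nat.lt_nth_iff_count_lt hCinf).mp (by omega)
    have hrs : st + rt = t := by
      rw [hst_def, hrt_def]; exact count_add_count_not pC t
    have hrt_ge : m s' ≤ rt := by
      simp only [hc_def] at hcs'
      omega
    have hstep1 : Sp (m s') ≤ Sp rt := hSp_mono hrt_ge
    have hstep2 : (s' : ℝ) + ∑ j ∈ Finset.range (s' + 1), |a (q j)| ≤ Sp (m s') :=
      hm_spec s'
    have hzero : ∑ j ∈ Finset.range (s' + 1), |a (q j)|
        + ∑ k ∈ Finset.range (s' + 1), a (q k) = 0 := by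
      rw [← Finset.sum_add_distrib]
      refine Finset.sum_eq_zero fun j _ => ?_
      rw [abs_of_neg (hq_neg j)]; ring
    have hKs' : (K : ℝ) ≤ (s' : ℝ) := by
      have : K ≤ s' := by omega
      exact_mod_cast this
    rw [hs']
    nlinarith [hstep1, hstep2, hzero, hKs']
  -- conclude
  rw [tendsto_atTop]
  intro B
  rw [eventually_atTop]
  refine ⟨c ⌈B⌉₊ + 1, fun t ht => ?_⟩
  exact le_trans (Nat.le_ceil B) (hbound ⌈B⌉₊ t (by omega))

/-- Statement (*): every weak-permutably convergent series is absolutely convergent. -/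
theorem weakPermConv_absConv (a : ℕ → ℝ)
    (hconv : ∃ s, SeriesConvTo a s)
    (hweak : ∀ σ : Equiv.Perm ℕ, ∃ f : ℕ → ℕ, ∃ t : ℝ,
      BracketConvTo (fun n => a (σ n)) f t) :
    ∃ l, SeriesConvTo (fun n => |a n|) l := by
  by_contra h
  push_neg at h
  obtain ⟨s, hs⟩ := hconv
  rw [SeriesConvTo] at hs
  have hmono : Monotone (fun n => ∑ i ∈ Finset.range n, |a i|) := fun n n' hn =>
    Finset.sum_le_sum_of_subset_of_nonneg (Finset.range_subset_range.mpr hn)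
      fun i _ _ => abs_nonneg _
  have habs : Tendsto (fun n => ∑ i ∈ Finset.range n, |a i|) atTop atTop := by
    by_cases hbdd : BddAbove (Set.range fun n => ∑ i ∈ Finset.range n, |a i|)
    · exact absurd (tendsto_atTop_ciSup hmono hbdd) (h _)
    · apply tendsto_atTop_atTop_of_monotone hmono
      intro b
      rcases not_bddAbove_iff.mp hbdd b with ⟨y, ⟨n, rfl⟩, hy⟩
      exact ⟨n, hy.le⟩
  obtain ⟨σ, hσ⟩ := exists_perm_tendsto_atTop a s hs habs
  obtain ⟨f, t, hf_mono, hf0, hlim⟩ := hweak σ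
  have hcomp : Tendsto (fun K => ∑ i ∈ Finset.range (f K), a (σ i)) atTop atTop :=
    hσ.comp hf_mono.tendsto_atTop
  exact not_tendsto_nhds_of_tendsto_atTop hcomp t hlim
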